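/- Let B = conv((B²₂ × {0}) ∪ {(0,0,±1)}) ⊂ ℝ³ and let S be the tetrahedron conv({0, v_1, v_2, v_3}) where v_i are the vertices of T* = (1/√3)·T + (0,0,(√3-1)/√3), with T the equilateral Euclidean triangle with vertices (±√3/2, -1/2, 0) and (0,1,0). Then no set of the form λ·S + x with λ > 0 and x ∈ ℝ³ is inscribed in B, i.e., there is no positive homothety of S all of whose four vertices lie on ∂B. -/

import Mathlib

open Set

/-- The Euclidean unit disk in the horizontal plane of `ℝ³`. -/
def diskSet : Set (Fin 3 → ℝ) := {p | p 0 ^ 2 + p 1 ^ 2 ≤ 1 ∧ p 2 = 0}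

/-- The double cone over the Euclidean unit disk with apexes `(0,0,±1)`. -/
def Bcone : Set (Fin 3 → ℝ) :=
  convexHull ℝ (diskSet ∪ ({![0, 0, 1], ![0, 0, -1]} : Set (Fin 3 → ℝ)))

-- triangle inequality for the planar Euclidean norm
lemma sqrt_tri (a b c d : ℝ) :
    Real.sqrt ((a + c) ^ 2 + (b + d) ^ 2)
      ≤ Real.sqrt (a ^ 2 + b ^ 2) + Real.sqrt (c ^ 2 + d ^ 2) := by
  have hu := Real.sqrt_nonneg (a ^ 2 + b ^ 2)
  have hv := Real.sqrt_nonneg (c ^ 2 + d ^ 2)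
  have hu2 := Real.sq_sqrt (show (0:ℝ) ≤ a ^ 2 + b ^ 2 by positivity)
  have hv2 := Real.sq_sqrt (show (0:ℝ) ≤ c ^ 2 + d ^ 2 by positivity)
  have key : a * c + b * d ≤ Real.sqrt (a ^ 2 + b ^ 2) * Real.sqrt (c ^ 2 + d ^ 2) := by
    nlinarith [sq_nonneg (a * d - b * c), mul_nonneg hu hv,
      sq_nonneg (Real.sqrt (a ^ 2 + b ^ 2) * Real.sqrt (c ^ 2 + d ^ 2) + (a * c + b * d))]
  calc Real.sqrt ((a + c) ^ 2 + (b + d) ^ 2)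
      ≤ Real.sqrt ((Real.sqrt (a ^ 2 + b ^ 2) + Real.sqrt (c ^ 2 + d ^ 2)) ^ 2) :=
        Real.sqrt_le_sqrt (by nlinarith)
    _ = _ := Real.sqrt_sq (by positivity)

noncomputable def nrm : Seminorm ℝ (Fin 3 → ℝ) :=
  Seminorm.of (fun p => Real.sqrt (p 0 ^ 2 + p 1 ^ 2) + |p 2|)
    (fun x y => by
      simp only [Pi.add_apply]
      have := sqrt_tri (x 0) (x 1) (y 0) (y 1)
      have := abs_add_le (x 2) (y 2)
      linarith)
    (fun a x => by
      simp only [Pi.smul_apply, smul_eq_mul, Real.norm_eq_abs]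
      have h : (a * x 0) ^ 2 + (a * x 1) ^ 2 = a ^ 2 * (x 0 ^ 2 + x 1 ^ 2) := by ring
      rw [h, Real.sqrt_mul (sq_nonneg a), Real.sqrt_sq_eq_abs, abs_mul]
      ring)

lemma nrm_apply (p : Fin 3 → ℝ) : nrm p = Real.sqrt (p 0 ^ 2 + p 1 ^ 2) + |p 2| := rfl

lemma Bcone_eq : Bcone = {p : Fin 3 → ℝ | nrm p ≤ 1} := by
  apply Subset.antisymm
  · apply convexHull_min
    · rintro p (⟨hp1, hp2⟩ | hp)
      · simp only [mem_setOf_eq, nrm_apply, hp2, abs_zero, add_zero]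
        exact Real.sqrt_le_one.mpr hp1
      · rcases hp with rfl | rfl <;>
          simp [mem_setOf_eq, nrm_apply, Matrix.cons_val_zero, Matrix.cons_val_one,
            Matrix.head_cons]
    · have : {p : Fin 3 → ℝ | nrm p ≤ 1} = nrm.closedBall 0 1 := by
        ext p; simp [Seminorm.mem_closedBall_zero]
      rw [this]
      exact Seminorm.convex_closedBall nrm 0 1
  · intro p hp
    simp only [mem_setOf_eq, nrm_apply] at hp
    have hsq : Real.sqrt (p 0 ^ 2 + p 1 ^ 2) ≤ 1 - |p 2| := by linarith
    have habs : |p 2| ≤ 1 := by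
      have := Real.sqrt_nonneg (p 0 ^ 2 + p 1 ^ 2); linarith
    by_cases h1 : |p 2| = 1
    · have h0 : Real.sqrt (p 0 ^ 2 + p 1 ^ 2) = 0 :=
        le_antisymm (by rw [h1] at hsq; linarith) (Real.sqrt_nonneg _)
      have hz : p 0 ^ 2 + p 1 ^ 2 = 0 := by
        have := Real.sqrt_eq_zero'.mp h0
        nlinarith [sq_nonneg (p 0), sq_nonneg (p 1)]
      have h00 : p 0 = 0 := by nlinarith [sq_nonneg (p 0), sq_nonneg (p 1)]
      have h01 : p 1 = 0 := by nlinarith [sq_nonneg (p 0), sq_nonneg (p 1)]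
      rcases (abs_eq (by norm_num : (0:ℝ) ≤ 1)).mp h1 with h2 | h2
      · apply subset_convexHull ℝ _
        refine Or.inr (Or.inl ?_)
        funext j; fin_cases j <;> simp [h00, h01, h2]
      · apply subset_convexHull ℝ _
        refine Or.inr (Or.inr ?_)
        funext j; fin_cases j <;> simp [h00, h01, h2]
    · have hlt : |p 2| < 1 := lt_of_le_of_ne habs h1
      set t := |p 2| with ht
      have h1t : (0:ℝ) < 1 - t := by linarith
      set d : Fin 3 → ℝ := ![p 0 / (1 - t), p 1 / (1 - t), 0] with hd
      have hA : p 0 ^ 2 + p 1 ^ 2 ≤ (1 - t) ^ 2 := by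
        nlinarith [Real.sq_sqrt (show (0:ℝ) ≤ p 0 ^ 2 + p 1 ^ 2 by positivity),
          Real.sqrt_nonneg (p 0 ^ 2 + p 1 ^ 2)]
      have hdm : d ∈ diskSet ∪ ({![0, 0, 1], ![0, 0, -1]} : Set (Fin 3 → ℝ)) := by
        refine Or.inl ⟨?_, rfl⟩
        simp only [hd, Matrix.cons_val_zero, Matrix.cons_val_one, Matrix.head_cons]
        rw [div_pow, div_pow, ← add_div, div_le_one (by positivity)]
        exact hA
      set a : Fin 3 → ℝ := if 0 ≤ p 2 then ![0, 0, 1] else ![0, 0, -1] with ha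
      have ham : a ∈ diskSet ∪ ({![0, 0, 1], ![0, 0, -1]} : Set (Fin 3 → ℝ)) := by
        rw [ha]; split_ifs
        · exact Or.inr (Or.inl rfl)
        · exact Or.inr (Or.inr rfl)
      have hcomb : p = (1 - t) • d + t • a := by
        funext j
        fin_cases j
        · show p 0 = (1 - t) * d 0 + t * a 0
          rw [ha]; split_ifs <;>
            simp [hd, mul_div_cancel₀, h1t.ne']
        · show p 1 = (1 - t) * d 1 + t * a 1
          rw [ha]; split_ifs <;>
            simp [hd, mul_div_cancel₀, h1t.ne']
        · show p 2 = (1 - t) * d 2 + t * a 2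
          rw [ha]; split_ifs with h
          · simp [hd, ht, abs_of_nonneg h]
          · simp [hd, ht, abs_of_neg (lt_of_not_ge h)]
      rw [hcomb]
      exact (convex_convexHull ℝ _) (subset_convexHull ℝ _ hdm) (subset_convexHull ℝ _ ham)
        (by linarith) (abs_nonneg _) (by ring)

lemma gauge_Bcone (p : Fin 3 → ℝ) : gauge Bcone p = nrm p := by
  have hset : Bcone = nrm.closedBall 0 1 := by
    rw [Bcone_eq]; ext q; simp [Seminorm.mem_closedBall_zero]
  apply le_antisymm
  · have h1 : gauge (nrm.ball 0 1) p = nrm p := congrFun (Seminorm.gauge_ball nrm) p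
    rw [hset, ← h1]
    exact gauge_mono (nrm.absorbent_ball_zero one_pos) (nrm.ball_subset_closedBall 0 1) p
  · rw [hset, gauge_def]
    apply le_csInf
    · have hpos : (0:ℝ) < nrm p + 1 := by linarith [apply_nonneg nrm p]
      refine ⟨nrm p + 1, ⟨hpos, ?_⟩⟩
      rw [Set.mem_smul_set_iff_inv_smul_mem₀ hpos.ne']
      rw [Seminorm.mem_closedBall_zero, map_smul_eq_mul]
      rw [Real.norm_eq_abs, abs_inv, abs_of_pos hpos]
      rw [inv_mul_le_iff₀ hpos]
      nlinarith [apply_nonneg nrm p]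
    · rintro r ⟨hr, y, hy, rfl⟩
      rw [Seminorm.mem_closedBall_zero] at hy
      rw [mem_Ioi] at hr
      rw [map_smul_eq_mul, Real.norm_eq_abs, abs_of_pos hr]
      nlinarith [apply_nonneg nrm y]

/-- Vertices of the equilateral triangle `T` in the horizontal plane. -/
noncomputable def vT : Fin 3 → (Fin 3 → ℝ) :=
  ![![Real.sqrt 3 / 2, -(1 / 2 : ℝ), 0], ![-(Real.sqrt 3 / 2), -(1 / 2 : ℝ), 0], ![0, 1, 0]]

/-- Vertices of the triangle `T⋆ = (1/√3)·T + (0,0,(√3-1)/√3)`. -/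
noncomputable def wT : Fin 3 → (Fin 3 → ℝ) :=
  fun i => (1 / Real.sqrt 3) • vT i + ![0, 0, (Real.sqrt 3 - 1) / Real.sqrt 3]

lemma endgame (s l x0 x1 x2 : ℝ) (hs2 : s ^ 2 = 3) (hs0 : 0 < s) (hl : 0 < l)
    (h0 : Real.sqrt (x0 ^ 2 + x1 ^ 2) + |x2| = 1)
    (E0 : Real.sqrt ((x0 + l / 2) ^ 2 + (x1 - l * s / 6) ^ 2) + |x2 + l * (3 - s) / 3| = 1)
    (E1 : Real.sqrt ((x0 - l / 2) ^ 2 + (x1 - l * s / 6) ^ 2) + |x2 + l * (3 - s) / 3| = 1)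
    (E2 : Real.sqrt (x0 ^ 2 + (x1 + l * s / 3) ^ 2) + |x2 + l * (3 - s) / 3| = 1) :
    False := by
  have hA0 : (0:ℝ) ≤ (x0 + l / 2) ^ 2 + (x1 - l * s / 6) ^ 2 := by positivity
  have hA1 : (0:ℝ) ≤ (x0 - l / 2) ^ 2 + (x1 - l * s / 6) ^ 2 := by positivity
  have hA2 : (0:ℝ) ≤ x0 ^ 2 + (x1 + l * s / 3) ^ 2 := by positivity
  -- equal square roots
  have hr01 : Real.sqrt ((x0 + l / 2) ^ 2 + (x1 - l * s / 6) ^ 2)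
      = Real.sqrt ((x0 - l / 2) ^ 2 + (x1 - l * s / 6) ^ 2) := by linarith
  have hr02 : Real.sqrt ((x0 + l / 2) ^ 2 + (x1 - l * s / 6) ^ 2)
      = Real.sqrt (x0 ^ 2 + (x1 + l * s / 3) ^ 2) := by linarith
  have hA01 : (x0 + l / 2) ^ 2 + (x1 - l * s / 6) ^ 2
      = (x0 - l / 2) ^ 2 + (x1 - l * s / 6) ^ 2 := by
    have := congrArg (· ^ 2) hr01
    simpa [Real.sq_sqrt hA0, Real.sq_sqrt hA1] using this
  have hA02 : (x0 + l / 2) ^ 2 + (x1 - l * s / 6) ^ 2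
      = x0 ^ 2 + (x1 + l * s / 3) ^ 2 := by
    have := congrArg (· ^ 2) hr02
    simpa [Real.sq_sqrt hA0, Real.sq_sqrt hA2] using this
  have hx0 : x0 = 0 := by
    have h2 : x0 * (2 * l) = 0 := by linear_combination hA01
    rcases mul_eq_zero.mp h2 with h | h
    · exact h
    · exfalso; linarith
  have hx1 : x1 = 0 := by
    have h3 : x1 * (l * s) = 0 := by
      linear_combination -hA02 - (l ^ 2 / 12) * hs2 + l * hx0
    rcases mul_eq_zero.mp h3 with h | h
    · exact h
    · exfalso; nlinarith
  subst hx0 hx1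
  -- |x2| = 1
  have habs : |x2| = 1 := by
    simpa using h0
  -- the common radius
  have hval : ((0:ℝ) + l / 2) ^ 2 + ((0:ℝ) - l * s / 6) ^ 2 = (l * s / 3) ^ 2 := by
    linear_combination (-(l ^ 2) / 12) * hs2
  rw [hval, Real.sqrt_sq (by positivity)] at E0
  -- now E0 : l*s/3 + |x2 + l*(3-s)/3| = 1
  have hs_lt : s < 2 := by nlinarith
  have hs_gt : 1 < s := by nlinarith
  clear hA0 hA1 hA2 hr01 hr02 hA01 hA02 hval E1 E2 h0
  rcases (abs_eq (by norm_num : (0:ℝ) ≤ 1)).mp habs with h2 | h2 <;>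
    rcases abs_cases (x2 + l * (3 - s) / 3) with ⟨hv, hsg⟩ | ⟨hv, hsg⟩ <;>
      rw [hv] at E0
  · -- x2 = 1, value nonneg : forces l = 0
    linarith
  · -- x2 = 1, value neg : impossible since 1 + l(3-s)/3 > 0
    nlinarith [mul_pos hl (show (0:ℝ) < 3 - s by linarith)]
  · -- x2 = -1, value nonneg : l = 2 and s ≤ 3/2, contradiction with s^2 = 3
    have hl2 : l = 2 := by linarith
    subst hl2
    nlinarith [hsg, hs2]
  · -- x2 = -1, value neg : l(2s-3) = 0
    have hls : l * (2 * s - 3) = 0 := by linear_combination 3 * E0 + 3 * h2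
    rcases mul_eq_zero.mp hls with h | h
    · linarith
    · have : s = 3 / 2 := by linarith
      rw [this] at hs2; norm_num at hs2


lemma coords (l : ℝ) (x : Fin 3 → ℝ) :
    ((l • wT 0 + x) 0 = x 0 + l / 2 ∧
     (l • wT 0 + x) 1 = x 1 - l * Real.sqrt 3 / 6 ∧
     (l • wT 0 + x) 2 = x 2 + l * (3 - Real.sqrt 3) / 3) ∧
    ((l • wT 1 + x) 0 = x 0 - l / 2 ∧
     (l • wT 1 + x) 1 = x 1 - l * Real.sqrt 3 / 6 ∧
     (l • wT 1 + x) 2 = x 2 + l * (3 - Real.sqrt 3) / 3) ∧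
    ((l • wT 2 + x) 0 = x 0 ∧
     (l • wT 2 + x) 1 = x 1 + l * Real.sqrt 3 / 3 ∧
     (l • wT 2 + x) 2 = x 2 + l * (3 - Real.sqrt 3) / 3) := by
  have h3 : Real.sqrt 3 * Real.sqrt 3 = 3 := Real.mul_self_sqrt (by norm_num)
  have hne : Real.sqrt 3 ≠ 0 := ne_of_gt (Real.sqrt_pos.mpr (by norm_num))
  refine ⟨⟨?_, ?_, ?_⟩, ⟨?_, ?_, ?_⟩, ⟨?_, ?_, ?_⟩⟩ <;>
    simp [wT, vT] <;> field_simp <;>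
      first
      | ring1
      | linear_combination (2 * l) * h3
      | linear_combination l * h3
      | linear_combination (-l) * h3

/-- No positive homothety `λ·S + x` of the tetrahedron `S = conv({0} ∪ T⋆)` is
inscribed in `B`, i.e. has all four vertices on the boundary of `B`. -/
theorem no_homothety_of_S_inscribed :
    ¬ ∃ (l : ℝ) (x : Fin 3 → ℝ), 0 < l ∧
      gauge Bcone (l • (0 : Fin 3 → ℝ) + x) = 1 ∧
      (∀ i, gauge Bcone (l • wT i + x) = 1) := by
  rintro ⟨l, x, hl, h0, hi⟩
  rw [smul_zero, zero_add, gauge_Bcone, nrm_apply] at h0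
  have key : ∀ i, Real.sqrt (((l • wT i + x) 0) ^ 2 + ((l • wT i + x) 1) ^ 2)
      + |(l • wT i + x) 2| = 1 := fun i => by
    rw [← nrm_apply, ← gauge_Bcone]; exact hi i
  obtain ⟨⟨a0, a1, a2⟩, ⟨b0, b1, b2⟩, ⟨c0, c1, c2⟩⟩ := coords l x
  have E0 := key 0; rw [a0, a1, a2] at E0
  have E1 := key 1; rw [b0, b1, b2] at E1
  have E2 := key 2; rw [c0, c1, c2] at E2
  exact endgame (Real.sqrt 3) l (x 0) (x 1) (x 2)
    (Real.sq_sqrt (by norm_num)) (Real.sqrt_pos.mpr (by norm_num)) hl h0 E0 E1 E2
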